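/- Let A be a finite-dimensional algebra over a field, e an idempotent, and t(M) = AeM. Let Λ' be a set of indices λ with indecomposable projective modules P(λ), and suppose that for every λ ∈ Λ' the socle of P(λ) satisfies soc P(λ) = Ae·soc P(λ). Set P = ⊕_{λ∈Λ'} P(λ). Then the map t : End_A(P) → End_A(t(P)) sending θ to its restriction θ|_{t(P)} is an injective algebra homomorphism. -/

import Mathlib

/-- The trace submodule `t(M) = AeM` of `M`. -/
def traceSub (A : Type) [Ring A] (e : A) (M : Type) [AddCommGroup M] [Module A M] :
    Submodule A M :=
  Submodule.span A (Set.range fun m : M => e • m)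

/-- The socle of a module: the sum of all its simple submodules. -/
def socleSub (A : Type) [Ring A] (M : Type) [AddCommGroup M] [Module A M] :
    Submodule A M :=
  sSup {S : Submodule A M | IsSimpleModule A ↥S}

/-- `Ae·N` for a submodule `N` of `M`. -/
def eTr (A : Type) [Ring A] (e : A) {M : Type} [AddCommGroup M] [Module A M]
    (N : Submodule A M) : Submodule A M :=
  Submodule.span A ((fun x => e • x) '' (N : Set M))

theorem traceSub_mapsTo (A : Type) [Ring A] (e : A) (M : Type) [AddCommGroup M]
    [Module A M] (θ : Module.End A M) :
    ∀ x ∈ traceSub A e M, θ x ∈ traceSub A e M := by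
  intro x hx
  have h : Submodule.map θ (traceSub A e M) ≤ traceSub A e M := by
    rw [traceSub, Submodule.map_span, Submodule.span_le]
    rintro y ⟨z, ⟨m, rfl⟩, rfl⟩
    exact Submodule.subset_span ⟨θ m, (map_smul θ e m).symm⟩
  exact h ⟨x, hx, rfl⟩

/-- The restriction map `End_A(M) → End_A(t(M))`, `θ ↦ θ|_{t(M)}`. -/
def resEnd (A : Type) [Ring A] (e : A) (M : Type) [AddCommGroup M] [Module A M]
    (θ : Module.End A M) : Module.End A ↥(traceSub A e M) :=
  LinearMap.restrict θ (traceSub_mapsTo A e M θ)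

/-- The socle is a semisimple module. -/
lemma socleSub_isSemisimple (A : Type) [Ring A] (M : Type) [AddCommGroup M] [Module A M] :
    IsSemisimpleModule A ↥(socleSub A M) := by
  rw [socleSub, sSup_eq_iSup]
  exact isSemisimpleModule_biSup_of_isSemisimpleModule_submodule
    (fun S (hS : IsSimpleModule A ↥S) => inferInstance)

/-- Key lemma: if `N` is semisimple with `Ae·N = N`, a nonzero submodule `T ≤ N`
cannot be killed by `e`. -/
lemma key_lemma (A : Type) [Ring A] (e : A) {M₀ : Type} [AddCommGroup M₀] [Module A M₀]
    (N T : Submodule A M₀) (hTN : T ≤ N) (hN : eTr A e N = N)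
    (hss : IsSemisimpleModule A ↥N)
    (hT0 : T ≠ ⊥) (hTe : ∀ t ∈ T, e • t = (0 : M₀)) : False := by
  classical
  set T' : Submodule A ↥N := T.comap N.subtype with hT'
  obtain ⟨C, hC⟩ := exists_isCompl T'
  set π := T'.projectionOnto C hC with hπ
  set g : ↥N →ₗ[A] M₀ := N.subtype ∘ₗ T'.subtype ∘ₗ π with hg
  have hgT : ∀ n : ↥N, g n ∈ T := fun n => (π n).2
  have hker : N ≤ Submodule.map N.subtype (LinearMap.ker g) := by
    conv_lhs => rw [← hN]
    rw [eTr, Submodule.span_le]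
    rintro x ⟨y, hy, rfl⟩
    have hxN : e • y ∈ N := hN ▸ Submodule.subset_span ⟨y, hy, rfl⟩
    refine ⟨⟨e • y, hxN⟩, ?_, rfl⟩
    have heq : (⟨e • y, hxN⟩ : ↥N) = e • (⟨y, hy⟩ : ↥N) := rfl
    have : g ⟨e • y, hxN⟩ = e • g ⟨y, hy⟩ := by rw [heq, map_smul]
    simpa [LinearMap.mem_ker, this] using hTe _ (hgT ⟨y, hy⟩)
  obtain ⟨t₀, ht₀T, ht₀⟩ := (Submodule.ne_bot_iff T).mp hT0
  have ht₀N : t₀ ∈ N := hTN ht₀T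
  have ht₀T' : (⟨t₀, ht₀N⟩ : ↥N) ∈ T' := ht₀T
  have hgt₀ : g ⟨t₀, ht₀N⟩ = t₀ := by
    have := Submodule.projectionOnto_apply_left hC ⟨⟨t₀, ht₀N⟩, ht₀T'⟩
    simp [hg, hπ, this]
  obtain ⟨n, hn, hn'⟩ := hker ht₀N
  have hnn : n = ⟨t₀, ht₀N⟩ := Subtype.ext hn'
  rw [hnn] at hn
  have hzero : g ⟨t₀, ht₀N⟩ = 0 := hn
  rw [hgt₀] at hzero
  exact ht₀ hzero

theorem resEnd_injective_algHom
    (K : Type) [Field K] (A : Type) [Ring A] [Algebra K A] [FiniteDimensional K A]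
    (e : A) (he : IsIdempotentElem e)
    (Λ' : Type) [Fintype Λ'] [DecidableEq Λ']
    (P : Λ' → Type) [∀ l, AddCommGroup (P l)] [∀ l, Module A (P l)]
    [∀ l, Module.Finite A (P l)]
    (hproj : ∀ l, Module.Projective A (P l))
    (hnontriv : ∀ l, Nontrivial (P l))
    (hindec : ∀ l, ∀ N₁ N₂ : Submodule A (P l), IsCompl N₁ N₂ → N₁ = ⊥ ∨ N₂ = ⊥)
    (hsoc : ∀ l, eTr A e (socleSub A (P l)) = socleSub A (P l)) :
    Function.Injective (resEnd A e (DirectSum Λ' P))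
    ∧ (∀ θ φ : Module.End A (DirectSum Λ' P),
        resEnd A e (DirectSum Λ' P) (θ * φ)
          = resEnd A e (DirectSum Λ' P) θ * resEnd A e (DirectSum Λ' P) φ)
    ∧ resEnd A e (DirectSum Λ' P) 1 = 1
    ∧ (∀ θ φ : Module.End A (DirectSum Λ' P),
        resEnd A e (DirectSum Λ' P) (θ + φ)
          = resEnd A e (DirectSum Λ' P) θ + resEnd A e (DirectSum Λ' P) φ) := by
  classical
  set M := DirectSum Λ' P with hM
  -- instances: M is a finite module over the Artinian ring A
  have hArt : IsArtinianRing A := isArtinian_of_tower K inferInstance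
  have hfin : Module.Finite A M :=
    Module.Finite.equiv (DirectSum.linearEquivFunOnFintype A Λ' P).symm
  have hArtM : IsArtinian A M := inferInstance
  refine ⟨?_, ?_, ?_, ?_⟩
  · -- injectivity
    intro θ φ h
    have hres : ∀ x (hx : x ∈ traceSub A e M), θ x = φ x := by
      intro x hx
      have h' : resEnd A e M θ ⟨x, hx⟩ = resEnd A e M φ ⟨x, hx⟩ := by rw [h]
      simpa [resEnd, LinearMap.restrict_apply, Subtype.ext_iff] using h'
    set ψ : Module.End A M := θ - φ with hψdef
    suffices hψ : ψ = 0 by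
      have := sub_eq_zero.mp hψ
      exact this
    by_contra hψ
    have hrange : LinearMap.range ψ ≠ ⊥ := by
      intro h0
      exact hψ (LinearMap.range_eq_bot.mp h0)
    rcases eq_bot_or_exists_atom_le (LinearMap.range ψ) with h0 | ⟨S, hS, hSle⟩
    · exact hrange h0
    have hψe : ∀ m : M, ψ (e • m) = 0 := by
      intro m
      have hmem : e • m ∈ traceSub A e M := Submodule.subset_span ⟨m, rfl⟩
      show θ (e • m) - φ (e • m) = 0
      rw [hres _ hmem, sub_self]
    have hSe : ∀ s ∈ S, e • s = (0 : M) := by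
      intro s hs
      obtain ⟨m, rfl⟩ := hSle hs
      rw [← map_smul]
      exact hψe m
    obtain ⟨s₀, hs₀S, hs₀⟩ := (Submodule.ne_bot_iff S).mp hS.1
    obtain ⟨l, hl⟩ : ∃ l, s₀ l ≠ 0 := by
      by_contra hcon
      push_neg at hcon
      exact hs₀ (DFinsupp.ext hcon)
    set c := DirectSum.component A Λ' P l with hc
    set T : Submodule A (P l) := Submodule.map c S with hT
    have hT0 : T ≠ ⊥ := by
      rw [Submodule.ne_bot_iff]
      exact ⟨s₀ l, ⟨s₀, hs₀S, rfl⟩, hl⟩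
    have hTe : ∀ t ∈ T, e • t = (0 : P l) := by
      rintro t ⟨s, hs, rfl⟩
      rw [← map_smul, hSe s hs, map_zero]
    -- T is simple
    have hSsimple : IsSimpleModule A ↥S := isSimpleModule_iff_isAtom.mpr hS
    set f : ↥S →ₗ[A] P l := c ∘ₗ S.subtype with hf
    have hfinj : Function.Injective f := by
      rw [← LinearMap.ker_eq_bot]
      by_contra hk
      have hlt : Submodule.map S.subtype (LinearMap.ker f) ≤ S := by
        rintro x ⟨y, _, rfl⟩; exact y.2
      have hne : Submodule.map S.subtype (LinearMap.ker f) ≠ S := by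
        intro heq
        have hmem : s₀ ∈ Submodule.map S.subtype (LinearMap.ker f) := by
          rw [heq]; exact hs₀S
        obtain ⟨y, hy, hy'⟩ := hmem
        apply hl
        have : f y = 0 := hy
        calc s₀ l = c s₀ := rfl
        _ = c (S.subtype y) := by rw [hy']
        _ = f y := rfl
        _ = 0 := this
      have hbot := hS.2 _ (lt_of_le_of_ne hlt hne)
      refine hk (le_bot_iff.mp fun x hx => ?_)
      have hmem : (x : M) ∈ Submodule.map S.subtype (LinearMap.ker f) := ⟨x, hx, rfl⟩
      rw [hbot] at hmem
      simpa using Subtype.ext (by simpa using hmem : (x : M) = 0)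
    have hrangef : LinearMap.range f = T := by
      rw [hf, LinearMap.range_comp, Submodule.range_subtype]
    have hTsimple : IsSimpleModule A ↥T := by
      rw [← hrangef]
      exact IsSimpleModule.congr (LinearEquiv.ofInjective f hfinj).symm
    have hTle : T ≤ socleSub A (P l) := le_sSup hTsimple
    exact key_lemma A e (socleSub A (P l)) T hTle (hsoc l)
      (socleSub_isSemisimple A (P l)) hT0 hTe
  · intro θ φ
    ext x
    simp [resEnd, LinearMap.restrict_apply, Module.End.mul_apply]
  · ext x
    simp [resEnd, LinearMap.restrict_apply]
  · intro θ φ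
    ext x
    simp [resEnd, LinearMap.restrict_apply]
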